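/- Let K be a compact metric space, X a Banach space, and T : X → C(K) a bounded linear operator into the space of real-valued continuous functions on K with the supremum norm. Assume there is a sequence (x_n)_{n∈ℕ} in X with ‖x_n‖ = 1 for all n such that (T(x_n))_n converges pointwise on K to a function H : K → ℝ, and assume there exist h > 0, a point t_0 ∈ K, and sequences (s_n), (s'_n) in K both converging to t_0 with limsup_{n→∞} |H(s_n) − H(s'_n)| ≥ h. Then for every weakly compact bounded linear operator S : X → C(K), ‖T − S‖ ≥ h/2; in particular ‖T‖_{e,w} ≥ h/2 and ‖T‖_e ≥ h/2. -/

import Mathlib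

open Filter Topology

/-- A bounded linear operator between normed spaces is weakly compact if the closure,
in the weak topology of the codomain, of the image of the closed unit ball is compact. -/
def IsWeaklyCompactOperator {X Y : Type*} [NormedAddCommGroup X] [NormedSpace ℝ X]
    [NormedAddCommGroup Y] [NormedSpace ℝ Y] (S : X →L[ℝ] Y) : Prop :=
  IsCompact (closure ((toWeakSpace ℝ Y) '' (⇑S '' Metric.closedBall 0 1)))

/-- Key auxiliary lemma: if `S x_n` has a pointwise cluster value `g` (a continuous
function), then `h/2 ≤ ‖T - S‖`. -/
lemma aux_lower_bound
    {X K : Type*} [NormedAddCommGroup X] [NormedSpace ℝ X]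
    [MetricSpace K] [CompactSpace K]
    (T S : X →L[ℝ] C(K, ℝ)) (x : ℕ → X) (hx : ∀ n, ‖x n‖ = 1)
    (H : K → ℝ)
    (hconv : ∀ t : K, Tendsto (fun n => T (x n) t) atTop (𝓝 (H t)))
    (h : ℝ) (t₀ : K) (s s' : ℕ → K)
    (hs : Tendsto s atTop (𝓝 t₀)) (hs' : Tendsto s' atTop (𝓝 t₀))
    (hjump : h ≤ limsup (fun n => |H (s n) - H (s' n)|) atTop)
    (g : C(K, ℝ)) (hg : ∀ t : K, MapClusterPt (g t) atTop (fun n => S (x n) t)) :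
    h / 2 ≤ ‖T - S‖ := by
  set C := ‖T - S‖ with hCdef
  have hC0 : 0 ≤ C := hCdef ▸ norm_nonneg (T - S)
  have key : ∀ t : K, |H t - g t| ≤ C := by
    intro t
    refine le_of_forall_pos_le_add ?_
    intro ε hε
    have h1 : ∀ᶠ n in atTop, |T (x n) t - H t| < ε / 2 := by
      have := Metric.tendsto_nhds.mp (hconv t) (ε / 2) (by positivity)
      simpa [Real.dist_eq] using this
    have h2 : ∃ᶠ n in atTop, |S (x n) t - g t| < ε / 2 := by
      have hball : Metric.ball (g t) (ε / 2) ∈ 𝓝 (g t) :=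
        Metric.ball_mem_nhds _ (by positivity)
      have := mapClusterPt_iff_frequently.mp (hg t) _ hball
      refine this.mono fun n hn => ?_
      simpa [Real.dist_eq] using hn
    obtain ⟨n, hn2, hn1⟩ := (h2.and_eventually h1).exists
    have hmid : |T (x n) t - S (x n) t| ≤ C := by
      have h3 : ‖(T - S) (x n) t‖ ≤ ‖(T - S) (x n)‖ :=
        ContinuousMap.norm_coe_le_norm _ t
      have h4 : ‖(T - S) (x n)‖ ≤ C := by
        calc ‖(T - S) (x n)‖ ≤ ‖T - S‖ * ‖x n‖ := (T - S).le_opNorm _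
        _ = C := by rw [hx n, mul_one]
      have h5 : (T - S) (x n) t = T (x n) t - S (x n) t := by
        simp
      rw [h5] at h3
      calc |T (x n) t - S (x n) t| = ‖T (x n) t - S (x n) t‖ := rfl
      _ ≤ ‖(T - S) (x n)‖ := h3
      _ ≤ C := h4
    have : |H t - g t| ≤ |H t - T (x n) t| + |T (x n) t - S (x n) t|
        + |S (x n) t - g t| := by
      have := abs_sub_abs_le_abs_sub (H t) (g t)
      calc |H t - g t| = |(H t - T (x n) t) + (T (x n) t - S (x n) t)
          + (S (x n) t - g t)| := by ring_nf
      _ ≤ _ := by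
        refine (abs_add_le _ _).trans ?_
        gcongr
        exact abs_add_le _ _
    have habs : |H t - T (x n) t| < ε / 2 := by rwa [abs_sub_comm]
    linarith
  -- `g` is continuous at `t₀`, so `g (s n) - g (s' n) → 0`.
  have hg0 : Tendsto (fun n => |g (s n) - g (s' n)|) atTop (𝓝 0) := by
    have h1 : Tendsto (fun n => g (s n) - g (s' n)) atTop (𝓝 (g t₀ - g t₀)) :=
      ((g.continuous.tendsto t₀).comp hs).sub ((g.continuous.tendsto t₀).comp hs')
    rw [sub_self] at h1
    simpa using h1.abs
  have hbound : h ≤ 2 * C := by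
    refine le_of_forall_pos_le_add ?_
    intro ε hε
    have hcob : IsCoboundedUnder (· ≤ ·) atTop (fun n => |H (s n) - H (s' n)|) := by
      refine IsBoundedUnder.isCoboundedUnder_le ⟨0, ?_⟩
      exact Filter.eventually_map.mpr (Filter.Eventually.of_forall fun n => abs_nonneg _)
    have hev : ∀ᶠ n in atTop, |H (s n) - H (s' n)| ≤ 2 * C + ε := by
      have hev0 : ∀ᶠ n in atTop, |g (s n) - g (s' n)| < ε := by
        have := Metric.tendsto_nhds.mp hg0 ε hε
        filter_upwards [this] with n hn
        simpa [Real.dist_eq, abs_abs] using hn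
      filter_upwards [hev0] with n hn
      have h1 : |H (s n) - H (s' n)| ≤ |H (s n) - g (s n)| + |g (s n) - g (s' n)|
          + |g (s' n) - H (s' n)| := by
        calc |H (s n) - H (s' n)| = |(H (s n) - g (s n)) + (g (s n) - g (s' n))
            + (g (s' n) - H (s' n))| := by ring_nf
        _ ≤ _ := by
          refine (abs_add_le _ _).trans ?_
          gcongr
          exact abs_add_le _ _
      have h2 := key (s n)
      have h3 := key (s' n)
      have h3' : |g (s' n) - H (s' n)| ≤ C := by rwa [abs_sub_comm]
      linarith
    have := Filter.limsup_le_of_le hcob hev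
    linarith [hjump.trans this]
  linarith

/-- Let `K` be a compact metric space, `X` a Banach space and
`T : X → C(K)` a bounded operator. Assume there is a normalized sequence `(x_n)` in `X`
such that `T x_n` converges pointwise to a function `H` having a discontinuity of height
`h > 0` at some point `t₀` (witnessed by two sequences `s, s' → t₀` with
`limsup |H (s n) - H (s' n)| ≥ h`). Then `‖T - S‖ ≥ h/2` for every weakly compact
operator `S`; in particular the same bound holds for every compact operator `S`. -/
theorem essentialNorm_lower_bound_of_pointwise_limit_discontinuity
    {X K : Type*} [NormedAddCommGroup X] [NormedSpace ℝ X] [CompleteSpace X]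
    [MetricSpace K] [CompactSpace K]
    (T : X →L[ℝ] C(K, ℝ)) (x : ℕ → X) (hx : ∀ n, ‖x n‖ = 1)
    (H : K → ℝ)
    (hconv : ∀ t : K, Tendsto (fun n => T (x n) t) atTop (𝓝 (H t)))
    (h : ℝ) (hh : 0 < h) (t₀ : K) (s s' : ℕ → K)
    (hs : Tendsto s atTop (𝓝 t₀)) (hs' : Tendsto s' atTop (𝓝 t₀))
    (hjump : h ≤ limsup (fun n => |H (s n) - H (s' n)|) atTop) :
    (∀ S : X →L[ℝ] C(K, ℝ), IsWeaklyCompactOperator S → h / 2 ≤ ‖T - S‖) ∧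
    (∀ S : X →L[ℝ] C(K, ℝ), IsCompactOperator ⇑S → h / 2 ≤ ‖T - S‖) := by
  have hxball : ∀ n, x n ∈ Metric.closedBall (0 : X) 1 := by
    intro n
    rw [Metric.mem_closedBall, dist_zero_right, hx n]
  constructor
  · -- weakly compact case
    intro S hS
    -- The sequence `toWeakSpace (S (x n))` lies in the weakly compact set.
    set A := closure ((toWeakSpace ℝ C(K, ℝ)) '' (⇑S '' Metric.closedBall 0 1)) with hA
    have hmem : ∀ n, toWeakSpace ℝ C(K, ℝ) (S (x n)) ∈ A := fun n =>
      subset_closure ⟨S (x n), ⟨x n, hxball n, rfl⟩, rfl⟩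
    have hle : map (fun n => toWeakSpace ℝ C(K, ℝ) (S (x n))) atTop ≤ 𝓟 A := by
      rw [le_principal_iff, mem_map]
      exact Filter.Eventually.of_forall hmem
    obtain ⟨g', _, hg'⟩ := hS.exists_clusterPt hle
    set g : C(K, ℝ) := (toWeakSpace ℝ C(K, ℝ)).symm g' with hgdef
    refine aux_lower_bound T S x hx H hconv h t₀ s s' hs hs' hjump g ?_
    intro t
    have hcont : Continuous fun f : WeakSpace ℝ C(K, ℝ) =>
        ((toWeakSpace ℝ C(K, ℝ)).symm f) t :=
      WeakBilin.eval_continuous ((topDualPairing ℝ C(K, ℝ)).flip)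
        (ContinuousMap.evalCLM ℝ t)
    have hmc : MapClusterPt g' atTop (fun n => toWeakSpace ℝ C(K, ℝ) (S (x n))) := hg'
    have := hmc.continuousAt_comp (hcont.continuousAt)
    simpa [hgdef, Function.comp_def] using this
  · -- compact case
    intro S hS
    have hcpt : IsCompact (closure (⇑S '' Metric.closedBall 0 1)) :=
      hS.isCompact_closure_image_of_isVonNBounded
        (NormedSpace.isVonNBounded_closedBall ℝ X 1)
    have hle : map (fun n => S (x n)) atTop ≤ 𝓟 (closure (⇑S '' Metric.closedBall 0 1)) := by
      rw [le_principal_iff, mem_map]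
      exact Filter.Eventually.of_forall fun n => subset_closure ⟨x n, hxball n, rfl⟩
    obtain ⟨g, _, hg⟩ := hcpt.exists_clusterPt hle
    refine aux_lower_bound T S x hx H hconv h t₀ s s' hs hs' hjump g ?_
    intro t
    have hcont : Continuous fun f : C(K, ℝ) => f t := continuous_eval_const t
    have hmc : MapClusterPt g atTop (fun n => S (x n)) := hg
    have := hmc.continuousAt_comp (hcont.continuousAt)
    simpa [Function.comp_def] using this
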